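/- Let p be a prime and X, Y projective integral varieties of the same dimension over a field k, with a k-morphism f : Y → X. Suppose n_Y = n_X = p (indices), the Rost invariant η_p(Y) ∈ ℤ/pℤ is nonzero, and the degree formula η_p(Y) = deg(f)·η_p(X) in ℤ/pℤ holds. Then deg(f) is prime to p, and consequently the restriction map on p-torsion Brauer groups Br(k(X))[p] → Br(k(Y))[p] induced by f is injective. -/
import Mathlib


/-- Let `p` be a prime and `X`, `Y` projective integral varieties of the
same dimension over a field `k`, with a `k`-morphism `f : Y → X`.  Suppose the indices
satisfy `n_Y = n_X = p` (so Rost's invariants `η_p(Y), η_p(X)` live in `ℤ/pℤ`), that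
`η_p(Y) ≠ 0`, and that the degree formula `η_p(Y) = deg(f)·η_p(X)` holds in `ℤ/pℤ`.
Then `deg f` is prime to `p`, and consequently the restriction map on `p`-torsion Brauer
groups `Br(k(X))[p] → Br(k(Y))[p]` induced by `f` is injective.  Formalization: `d` is
`deg f`; `BrX`, `BrY` are the `p`-torsion subgroups of `Br k(X)`, `Br k(Y)` (so `p•x = 0`,
`htors`), with restriction `res` and corestriction `cores` satisfying
`cores ∘ res = deg(f) • id` (`hrescores`, the standard fact for a degree-`d` extension of
function fields). -/
theorem stmt17 (p : ℕ) (hp : p.Prime) (d : ℤ)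
    (ηX ηY : ZMod p) (hηY : ηY ≠ 0) (hformula : ηY = d • ηX)
    (BrX BrY : Type*) [AddCommGroup BrX] [AddCommGroup BrY]
    (res : BrX →+ BrY) (cores : BrY →+ BrX)
    (hrescores : ∀ x : BrX, cores (res x) = d • x)
    (htors : ∀ x : BrX, (p : ℤ) • x = 0) :
    ¬ (p : ℤ) ∣ d ∧ Function.Injective res := by
  have hnd : ¬ (p : ℤ) ∣ d := by
    intro ⟨c, hc⟩
    apply hηY
    rw [hformula, hc, zsmul_eq_mul]
    push_cast
    simp [ZMod.natCast_self]
  refine ⟨hnd, ?_⟩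
  have hcop : IsCoprime d (p : ℤ) := by
    rw [Int.isCoprime_iff_gcd_eq_one]
    rcases hp.eq_one_or_self_of_dvd (Int.gcd d p) (by
      have := Int.gcd_dvd_right (a := d) (b := (p : ℤ))
      exact_mod_cast Int.ofNat_dvd.mp (by simpa using this)) with h | h
    · exact h
    · exfalso; apply hnd
      have := Int.gcd_dvd_left (a := d) (b := (p : ℤ))
      rw [h] at this
      exact_mod_cast this
  obtain ⟨u, v, huv⟩ := hcop
  rw [injective_iff_map_eq_zero]
  intro x hx
  have hdx : d • x = 0 := by rw [← hrescores x, hx, map_zero]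
  calc x = (u * d + v * p) • x := by rw [huv, one_smul]
    _ = u • (d • x) + v • ((p : ℤ) • x) := by rw [add_smul, mul_smul, mul_smul]
    _ = 0 := by rw [hdx, htors, smul_zero, smul_zero, add_zero]
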